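/- Any nonzero equilibrium (A, M, F) of the SIT entomological model satisfies the relation ((M + εM_S*)/(M + M_S*))·N = 1 + (μ_A2/(γ+μ_A1))·A, where M = ((1−r)γ/μ_M)·A; equivalently, with α := M_S*/M and Q_S := M_S*·(μ_A2 μ_M)/((γ+μ_A1)(1−r)γ), the equation (1−Nε)α² + (1+Q_S−N)α + Q_S = 0 holds. -/

import Mathlib

theorem stmt11 (φ γ μA1 μA2 μM μS MS r ε A M F : ℝ)
    (hφ : 0 < φ) (hγ : 0 < γ) (hμA1 : 0 < μA1) (hμA2 : 0 < μA2)
    (hμM : 0 < μM) (hμS : 0 < μS) (hMS : 0 < MS)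
    (hr0 : 0 < r) (hr1 : r < 1) (hε0 : 0 ≤ ε) (hε1 : ε < 1)
    (hA : 0 < A)
    (heq1 : φ * F = (γ + μA1 + μA2 * A) * A)
    (heq2 : (1 - r) * γ * A = μM * M)
    (heq3 : ((M + ε * MS) / (M + MS)) * (r * γ) * A = μS * F) :
    let N := r * γ * φ / (μS * (γ + μA1))
    let α := MS / M
    let QS := MS * (μA2 * μM) / ((γ + μA1) * (1 - r) * γ)
    ((M + ε * MS) / (M + MS)) * N = 1 + (μA2 / (γ + μA1)) * A ∧
    (1 - N * ε) * α ^ 2 + (1 + QS - N) * α + QS = 0 := by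
  have h1r : (0:ℝ) < 1 - r := by linarith
  have hM : 0 < M := by
    have := mul_pos (mul_pos h1r hγ) hA
    nlinarith
  have hMMS : M + MS ≠ 0 := by positivity
  have heq3' : (M + ε * MS) * (r * γ) * A = μS * F * (M + MS) := by
    field_simp at heq3; linarith [heq3]
  have key0 : ((M + ε * MS) * (r * γ) * φ) * A = (μS * ((γ + μA1 + μA2 * A) * (M + MS))) * A := by
    linear_combination φ * heq3' + μS * (M + MS) * heq1
  have key : (M + ε * MS) * (r * γ) * φ = μS * ((γ + μA1 + μA2 * A) * (M + MS)) :=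
    mul_right_cancel₀ hA.ne' key0
  intro N α Q
  have hγμ : (0:ℝ) < γ + μA1 := by positivity
  constructor
  · show (M + ε * MS) / (M + MS) * (r * γ * φ / (μS * (γ + μA1))) = 1 + μA2 / (γ + μA1) * A
    field_simp
    linear_combination key
  · show (1 - r * γ * φ / (μS * (γ + μA1)) * ε) * (MS/M)^2 + (1 + MS * (μA2 * μM) / ((γ + μA1) * (1 - r) * γ) - r * γ * φ / (μS * (γ + μA1))) * (MS/M) + MS * (μA2 * μM) / ((γ + μA1) * (1 - r) * γ) = 0
    field_simp
    linear_combination (-(MS * γ * (1 - r))) * key +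
      (-(MS * μS * μA2 * (M + MS))) * heq2
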